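/- Let P and Q be probability measures on a measurable space Ω with P absolutely continuous with respect to Q, and let F : Ω → ℝ be a bounded measurable function. Then ∫ F dP − log ∫ exp(F) dQ ≤ KL(P‖Q), i.e. the Donsker–Varadhan objective evaluated at any bounded measurable F is a lower bound on the Kullback–Leibler divergence. -/

import Mathlib

open MeasureTheory Real Classical

/-- The Kullback–Leibler divergence `KL(P‖Q) = ∫ log (dP/dQ) dP` when `P ≪ Q` (and the
integral is finite), and `+∞` otherwise, as an extended real number. -/

noncomputable def KLdiv {Ω : Type*} [MeasurableSpace Ω] (P Q : Measure Ω) : EReal :=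
  if P ≪ Q ∧ Integrable (llr P Q) P then ((∫ ω, llr P Q ω ∂P : ℝ) : EReal) else ⊤

lemma integral_llr_nonneg_aux {Ω : Type*} [MeasurableSpace Ω]
    (P Q : Measure Ω) [IsProbabilityMeasure P] [IsProbabilityMeasure Q]
    (hPQ : P ≪ Q) (h_int : Integrable (llr P Q) P) :
    0 ≤ ∫ ω, llr P Q ω ∂P := by
  set g : Ω → ℝ := fun ω ↦ ((P.rnDeriv Q ω)⁻¹).toReal with hg
  have hg_meas : Measurable g := (P.measurable_rnDeriv Q).inv.ennreal_toReal
  have hg_nonneg : ∀ ω, 0 ≤ g ω := fun ω ↦ ENNReal.toReal_nonneg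
  -- lintegral bound
  have h_lint : ∫⁻ ω, (P.rnDeriv Q ω)⁻¹ ∂P ≤ 1 := by
    rw [← lintegral_rnDeriv_mul hPQ (f := fun ω ↦ (P.rnDeriv Q ω)⁻¹)
      (P.measurable_rnDeriv Q).inv.aemeasurable]
    calc ∫⁻ ω, P.rnDeriv Q ω * (P.rnDeriv Q ω)⁻¹ ∂Q
        ≤ ∫⁻ _, 1 ∂Q := lintegral_mono fun ω ↦ ENNReal.mul_inv_le_one _
      _ = 1 := by simp
  have hg_int : Integrable g P := by
    refine ⟨hg_meas.aestronglyMeasurable, ?_⟩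
    rw [hasFiniteIntegral_iff_norm]
    calc ∫⁻ ω, ENNReal.ofReal ‖g ω‖ ∂P
        ≤ ∫⁻ ω, (P.rnDeriv Q ω)⁻¹ ∂P := by
          refine lintegral_mono fun ω ↦ ?_
          rw [Real.norm_of_nonneg (hg_nonneg ω)]
          exact ENNReal.ofReal_toReal_le
      _ ≤ 1 := h_lint
      _ < ⊤ := ENNReal.one_lt_top
  have hg_integral_le : ∫ ω, g ω ∂P ≤ 1 := by
    rw [integral_eq_lintegral_of_nonneg_ae (Filter.Eventually.of_forall hg_nonneg)
      hg_meas.aestronglyMeasurable]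
    calc (∫⁻ ω, ENNReal.ofReal (g ω) ∂P).toReal
        ≤ (∫⁻ ω, (P.rnDeriv Q ω)⁻¹ ∂P).toReal := by
          refine ENNReal.toReal_mono (ne_top_of_le_ne_top ENNReal.one_ne_top h_lint) ?_
          refine lintegral_mono fun ω ↦ ENNReal.ofReal_toReal_le
      _ ≤ 1 := by
          simpa using ENNReal.toReal_mono ENNReal.one_ne_top h_lint
  -- pointwise: -llr ≤ g - 1
  have h_ae : ∀ᵐ ω ∂P, -llr P Q ω ≤ g ω - 1 := by
    filter_upwards [Measure.rnDeriv_pos hPQ, hPQ.ae_le (Measure.rnDeriv_lt_top P Q)]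
      with ω h_pos h_lt
    have hD_pos : 0 < (P.rnDeriv Q ω).toReal :=
      ENNReal.toReal_pos h_pos.ne' h_lt.ne
    have hgω : g ω = ((P.rnDeriv Q ω).toReal)⁻¹ := by
      rw [hg]; simp [ENNReal.toReal_inv]
    rw [llr, ← Real.log_inv, hgω]
    exact Real.log_le_sub_one_of_pos (inv_pos.mpr hD_pos)
  have := integral_mono_ae h_int.neg (hg_int.sub (integrable_const 1)) h_ae
  simp only [Pi.neg_apply, Pi.sub_apply] at this
  rw [integral_neg, integral_sub hg_int (integrable_const 1)] at this
  simp only [integral_const, measure_univ, probReal_univ, ENNReal.toReal_one, smul_eq_mul, one_mul] at this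
  linarith

/-- The Donsker–Varadhan objective evaluated at any bounded measurable `F` is a lower
bound on the Kullback–Leibler divergence. -/
theorem donsker_varadhan_lower_bound {Ω : Type*} [MeasurableSpace Ω]
    (P Q : Measure Ω) [IsProbabilityMeasure P] [IsProbabilityMeasure Q]
    (hPQ : P ≪ Q) (F : Ω → ℝ) (hF : Measurable F) (C : ℝ) (hFbdd : ∀ ω, |F ω| ≤ C) :
    (((∫ ω, F ω ∂P) - Real.log (∫ ω, Real.exp (F ω) ∂Q) : ℝ) : EReal) ≤ KLdiv P Q := by
  by_cases h_int : Integrable (llr P Q) P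
  · rw [KLdiv, if_pos ⟨hPQ, h_int⟩, EReal.coe_le_coe_iff]
    have hFP : Integrable F P :=
      (integrable_const C).mono' hF.aestronglyMeasurable
        (Filter.Eventually.of_forall fun ω ↦ by simpa using hFbdd ω)
    have hexp : Integrable (fun ω ↦ Real.exp (F ω)) Q := by
      refine (integrable_const (Real.exp C)).mono'
        (Real.measurable_exp.comp hF).aestronglyMeasurable
        (Filter.Eventually.of_forall fun ω ↦ ?_)
      rw [Real.norm_of_nonneg (Real.exp_pos _).le]
      exact Real.exp_le_exp.mpr ((abs_le.mp (hFbdd ω)).2)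
    haveI : IsProbabilityMeasure (Q.tilted F) := isProbabilityMeasure_tilted hexp
    have hPν : P ≪ Q.tilted F := hPQ.trans (absolutelyContinuous_tilted hexp)
    have h_key : ∫ ω, llr P (Q.tilted F) ω ∂P
        = ∫ ω, llr P Q ω ∂P - ∫ ω, F ω ∂P + Real.log (∫ ω, Real.exp (F ω) ∂Q) :=
      integral_llr_tilted_right hPQ hFP hexp h_int
    have h_nonneg : 0 ≤ ∫ ω, llr P (Q.tilted F) ω ∂P :=
      integral_llr_nonneg_aux P (Q.tilted F) hPν
        (integrable_llr_tilted_right hPQ hFP h_int hexp)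
    linarith
  · rw [KLdiv, if_neg (fun h ↦ h_int h.2)]
    exact le_top
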